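/- Let {ψ_i}_{i=1}^n be an orthonormal basis of ℝ^n with overlap at most K, let 1 ≤ p < ∞ with Hölder conjugate p', let f, z ∈ ℝ^n, and suppose ‖f − Σ_i z_i ψ_i‖_p ≤ E. Then Σ_{k=1}^n |⟨f, ψ_k⟩ − z_k|^p / ‖ψ_k‖_{p'}^p ≤ K · E^p. -/

import Mathlib

open scoped ENNReal

/-- Standard inner product on `ℝ^n`. -/
noncomputable def dotp {n : ℕ} (x y : Fin n → ℝ) : ℝ := ∑ j, x j * y j

/-- The `ℓ_p` norm on `ℝ^n`, for `p ∈ [1, ∞]` (extended-real exponent). -/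
noncomputable def lpNorm {n : ℕ} (p : ℝ≥0∞) (x : Fin n → ℝ) : ℝ :=
  if p = ∞ then ⨆ j, |x j| else (∑ j, |x j| ^ p.toReal) ^ (1 / p.toReal)

/-- let `{ψ_i}` be an orthonormal basis of `ℝ^n` with overlap at most `K`
(every coordinate lies in the support of at most `K` of the `ψ_i`), let `1 ≤ p < ∞`
with Hölder conjugate `q` (`1/p + 1/q = 1`, `q = ∞` when `p = 1`), let `f, z ∈ ℝ^n`,
and suppose `‖f − Σ_i z_i ψ_i‖_p ≤ E`.  Then
`Σ_k |⟨f, ψ_k⟩ − z_k|^p / ‖ψ_k‖_q^p ≤ K · E^p`. -/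
theorem stmt5 {n K : ℕ} (ψ : Fin n → Fin n → ℝ)
    (horth : ∀ i k, dotp (ψ i) (ψ k) = if i = k then (1 : ℝ) else 0)
    (hK : ∀ j : Fin n, ({i | ψ i j ≠ 0} : Set (Fin n)).ncard ≤ K)
    (p q : ℝ≥0∞) (hp1 : 1 ≤ p) (hptop : p ≠ ∞) (hpq : 1 / p + 1 / q = 1)
    (f z : Fin n → ℝ) (E : ℝ)
    (hE : lpNorm p (fun j => f j - ∑ i, z i * ψ i j) ≤ E) :
    ∑ k, |dotp f (ψ k) - z k| ^ p.toReal / lpNorm q (ψ k) ^ p.toReal ≤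
      (K : ℝ) * E ^ p.toReal := by
  classical
  simp only [dotp] at horth ⊢
  set pt := p.toReal with hptdef
  have hpt1 : 1 ≤ pt := by
    rw [hptdef, ← ENNReal.toReal_one]
    exact ENNReal.toReal_mono hptop hp1
  have hpt0 : (0:ℝ) < pt := lt_of_lt_of_le one_pos hpt1
  set r : Fin n → ℝ := fun j => f j - ∑ i, z i * ψ i j with hrdef
  have hlp : lpNorm p r = (∑ j, |r j| ^ pt) ^ (1/pt) := by
    rw [lpNorm, if_neg hptop]
  have hE0 : 0 ≤ E := le_trans (by rw [hlp]; positivity) hE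
  have hsum : ∑ j, |r j| ^ pt ≤ E ^ pt := by
    have hnn : (0:ℝ) ≤ ∑ j, |r j| ^ pt := by positivity
    have h := Real.rpow_le_rpow (by rw [hlp]; positivity) hE hpt0.le
    rwa [hlp, one_div, Real.rpow_inv_rpow hnn hpt0.ne'] at h
  -- rewrite the inner products through the residual r
  have hdot : ∀ k, (∑ j, f j * ψ k j) - z k = ∑ j, r j * ψ k j := by
    intro k
    have hswap : ∑ j, (∑ i, z i * ψ i j) * ψ k j = z k := by
      simp_rw [Finset.sum_mul, mul_assoc]
      rw [Finset.sum_comm]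
      simp_rw [← Finset.mul_sum, horth]
      simp
    simp only [hrdef, sub_mul, Finset.sum_sub_distrib, hswap]
  -- every ψ k is nonzero
  have hne : ∀ k, ∃ j, ψ k j ≠ 0 := by
    intro k
    by_contra h
    push_neg at h
    have := horth k k
    simp [h] at this
  set S : Fin n → Finset (Fin n) := fun k => Finset.univ.filter (fun j => ψ k j ≠ 0) with hSdef
  have hdre : ∀ k, ∑ j, r j * ψ k j = ∑ j ∈ S k, r j * ψ k j := by
    intro k
    symm
    apply Finset.sum_subset (Finset.filter_subset _ _)
    intro j _ hj
    simp only [hSdef, Finset.mem_filter, Finset.mem_univ, true_and, not_not] at hj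
    simp [hj]
  -- positivity of the norms
  have hLpos : ∀ k, 0 < lpNorm q (ψ k) := by
    intro k
    obtain ⟨j0, hj0⟩ := hne k
    by_cases hq : q = ∞
    · rw [lpNorm, if_pos hq]
      have : Nonempty (Fin n) := ⟨k⟩
      exact lt_of_lt_of_le (abs_pos.mpr hj0)
        (le_ciSup (f := fun j' => |ψ k j'|) (Set.Finite.bddAbove (Set.finite_range _)) j0)
    · rw [lpNorm, if_neg hq]
      apply Real.rpow_pos_of_pos
      refine Finset.sum_pos' (fun j _ => Real.rpow_nonneg (abs_nonneg _) _)
        ⟨j0, Finset.mem_univ _, Real.rpow_pos_of_pos (abs_pos.mpr hj0) _⟩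
  -- Hölder per k
  have hHolder : ∀ k, |∑ j, r j * ψ k j| ≤
      (∑ j ∈ S k, |r j| ^ pt) ^ (1/pt) * lpNorm q (ψ k) := by
    intro k
    have habs : |∑ j, r j * ψ k j| ≤ ∑ j ∈ S k, |r j| * |ψ k j| := by
      rw [hdre k]
      refine le_trans (Finset.abs_sum_le_sum_abs _ _) ?_
      simp [abs_mul]
    by_cases hq : q = ∞
    · have hp1' : p = 1 := by
        rw [hq] at hpq
        simp only [one_div, ENNReal.inv_top, add_zero, ENNReal.inv_eq_one] at hpq
        exact hpq
      have hpt' : pt = 1 := by rw [hptdef, hp1', ENNReal.toReal_one]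
      have : Nonempty (Fin n) := ⟨k⟩
      rw [lpNorm, if_pos hq]
      simp only [hpt', one_div_one, Real.rpow_one]
      refine habs.trans ?_
      calc ∑ j ∈ S k, |r j| * |ψ k j|
          ≤ ∑ j ∈ S k, |r j| * (⨆ j', |ψ k j'|) := by
            refine Finset.sum_le_sum fun j _ => ?_
            exact mul_le_mul_of_nonneg_left
              (le_ciSup (f := fun j' => |ψ k j'|) (Set.Finite.bddAbove (Set.finite_range _)) j)
              (abs_nonneg _)
        _ = (∑ j ∈ S k, |r j|) * (⨆ j', |ψ k j'|) := by rw [Finset.sum_mul]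
    · have hq0 : q ≠ 0 := by
        rintro rfl
        simp at hpq
      set qt := q.toReal with hqtdef
      have hconj : Real.HolderConjugate pt qt := by
        rw [Real.holderConjugate_iff]
        constructor
        · have hp_ne1 : p ≠ 1 := by
            rintro rfl
            have h0 : (1:ℝ≥0∞) + 1/q = 1 + 0 := by simpa using hpq
            have := (ENNReal.add_right_inj (by simp)).mp h0
            rw [one_div, ENNReal.inv_eq_zero] at this
            exact hq this
          have hlt : 1 < p := lt_of_le_of_ne hp1 (Ne.symm hp_ne1)
          have := (ENNReal.toReal_lt_toReal (by simp) hptop).mpr hlt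
          simpa using this
        · have hpne0 : p ≠ 0 := (lt_of_lt_of_le zero_lt_one hp1).ne'
          have h1 : p⁻¹ + q⁻¹ = 1 := by simpa [one_div] using hpq
          have h2 : (p⁻¹ + q⁻¹).toReal = 1 := by rw [h1]; simp
          rw [ENNReal.toReal_add (by simp [hpne0]) (by simp [hq0])] at h2
          simpa [ENNReal.toReal_inv] using h2
      have hLq : lpNorm q (ψ k) = (∑ j ∈ S k, |ψ k j| ^ qt) ^ (1/qt) := by
        rw [lpNorm, if_neg hq]
        congr 1
        symm
        apply Finset.sum_subset (Finset.filter_subset _ _)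
        intro j _ hj
        simp only [hSdef, Finset.mem_filter, Finset.mem_univ, true_and, not_not] at hj
        rw [hj, abs_zero, Real.zero_rpow hconj.symm.pos.ne']
      refine habs.trans ?_
      rw [hLq]
      exact Real.inner_le_Lp_mul_Lq_of_nonneg (S k) hconj
        (fun j _ => abs_nonneg _) (fun j _ => abs_nonneg _)
  -- per-k bound after dividing
  have hmain : ∀ k, |∑ j, r j * ψ k j| ^ pt / lpNorm q (ψ k) ^ pt ≤
      ∑ j ∈ S k, |r j| ^ pt := by
    intro k
    have hL := hLpos k
    rw [div_le_iff₀ (by positivity)]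
    calc |∑ j, r j * ψ k j| ^ pt
        ≤ ((∑ j ∈ S k, |r j| ^ pt) ^ (1/pt) * lpNorm q (ψ k)) ^ pt :=
          Real.rpow_le_rpow (abs_nonneg _) (hHolder k) hpt0.le
      _ = (∑ j ∈ S k, |r j| ^ pt) * lpNorm q (ψ k) ^ pt := by
          rw [Real.mul_rpow (by positivity) hL.le, one_div,
            Real.rpow_inv_rpow (by positivity) hpt0.ne']
  calc ∑ k, |(∑ j, f j * ψ k j) - z k| ^ pt / lpNorm q (ψ k) ^ pt
      ≤ ∑ k, ∑ j ∈ S k, |r j| ^ pt := by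
        refine Finset.sum_le_sum fun k _ => ?_
        rw [hdot k]
        exact hmain k
    _ = ∑ j, ((Finset.univ.filter (fun k => ψ k j ≠ 0)).card : ℝ) * |r j| ^ pt := by
        simp_rw [hSdef, Finset.sum_filter]
        rw [Finset.sum_comm]
        refine Finset.sum_congr rfl fun j _ => ?_
        rw [← Finset.sum_filter, Finset.sum_const, nsmul_eq_mul]
    _ ≤ ∑ j, (K : ℝ) * |r j| ^ pt := by
        refine Finset.sum_le_sum fun j _ => ?_
        refine mul_le_mul_of_nonneg_right ?_ (by positivity)
        have hset : ({i | ψ i j ≠ 0} : Set (Fin n)) =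
            ↑(Finset.univ.filter (fun i => ψ i j ≠ 0)) := by
          ext i; simp
        have hcard := hK j
        rw [hset, Set.ncard_coe_finset] at hcard
        exact_mod_cast hcard
    _ = (K : ℝ) * ∑ j, |r j| ^ pt := by rw [Finset.mul_sum]
    _ ≤ (K : ℝ) * E ^ pt := by
        exact mul_le_mul_of_nonneg_left hsum (by positivity)
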